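/- Let (g_k)_{k≥1} and (g′_k)_{k≥1} be two families of measurable functions X → [0, ∞), each with 0 < ∫ g_k dμ < ∞ and 0 < ∫ g′_k dμ < ∞, and suppose there is an integer T ≥ 0 such that g_k = g′_k for all k > T. Let Nₙ(x) and N′ₙ(x) denote the corresponding quantities built from (g_k) and (g′_k) respectively. Then for every n ≥ T + 1 and all x, x′ ∈ X, |log(Nₙ(x)/N_{n−1}(x)) − log(N′ₙ(x′)/N′_{n−1}(x′))| ≤ ρ^{n−T−1}/(1 − ρ), where ρ = 1 − σ₋/σ₊. (This is inequality (26) from the proof of Lemma 11: once two observation sequences agree after the coupling time T, the one-step conditional log-densities computed from the two sequences and arbitrary initializations coalesce geometrically fast.) -/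

import Mathlib

open MeasureTheory

set_option linter.unusedSectionVars false
set_option linter.unusedVariables false
set_option maxHeartbeats 1000000

/-- `Nseq μ q g x n = ∫_{Xⁿ} ∏_{k=1}ⁿ q(x_{k−1}, x_k) g_k(x_k) μ(dx₁)⋯μ(dxₙ)`,
with `x₀ := x` (for `n = 0` this is `1`, the empty product integrated against a
probability measure). The coordinate `xs k` of `xs : Fin n → X` plays the role
of `x_{k+1}`, and `g (k+1)` plays the role of `g_{k+1}`. -/
noncomputable def Nseq {X : Type*} [MeasurableSpace X] (μ : Measure X)
    (q : X → X → ℝ) (g : ℕ → X → ℝ) (x : X) (n : ℕ) : ℝ :=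
  ∫ xs : Fin n → X,
    ∏ k : Fin n,
      q (if (k : ℕ) = 0 then x
         else xs ⟨(k : ℕ) - 1, Nat.lt_of_le_of_lt (Nat.sub_le _ _) k.isLt⟩) (xs k) *
        g ((k : ℕ) + 1) (xs k)
    ∂(Measure.pi fun _ => μ)

section
variable {X : Type*} [MeasurableSpace X]

def shf (g : ℕ → X → ℝ) : ℕ → X → ℝ := fun k => g (k + 1)
def shfI (t : ℕ) (g : ℕ → X → ℝ) : ℕ → X → ℝ := fun k => g (k + t)

def Fam (μ : Measure X) (g : ℕ → X → ℝ) : Prop :=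
  ∀ k, 1 ≤ k → Measurable (g k) ∧ (∀ x, 0 ≤ g k x) ∧ Integrable (g k) μ ∧ 0 < ∫ x, g k x ∂μ

variable {μ : Measure X}

lemma Fam.shf {g : ℕ → X → ℝ} (hg : Fam μ g) : Fam μ (_root_.shf g) :=
  fun k hk => hg (k + 1) (by omega)

lemma Fam.shfI {g : ℕ → X → ℝ} (hg : Fam μ g) (t : ℕ) : Fam μ (_root_.shfI t g) :=
  fun k hk => hg (k + t) (by omega)

lemma shfI_shf (t : ℕ) (g : ℕ → X → ℝ) : shfI t (shf g) = shfI (t + 1) g := by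
  funext k y
  simp only [shfI, shf]
  ring_nf

noncomputable def Pg (μ : Measure X) (g : ℕ → X → ℝ) (n : ℕ) : ℝ :=
  ∏ k ∈ Finset.range n, ∫ y, g (k + 1) y ∂μ

lemma Pg_pos {g : ℕ → X → ℝ} (hg : Fam μ g) (n : ℕ) : 0 < Pg μ g n :=
  Finset.prod_pos fun k _ => (hg (k + 1) (by omega)).2.2.2

lemma int_mul_W [IsProbabilityMeasure μ] {W h : X → ℝ} (hWi : Integrable W μ) (hh : Measurable h) {D : ℝ}
    (hD : ∀ y, |h y| ≤ D) : Integrable (fun y => h y * W y) μ :=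
  hWi.bdd_mul (c := D) hh.aestronglyMeasurable (Filter.Eventually.of_forall (by simpa [Real.norm_eq_abs] using hD))

lemma Pg_succ (g : ℕ → X → ℝ) (n : ℕ) :
    Pg μ g (n + 1) = Pg μ (shf g) n * ∫ y, g 1 y ∂μ := by
  rw [Pg, Finset.prod_range_succ']
  rfl

end

section
variable {X : Type*} [MeasurableSpace X] {μ : Measure X} [IsProbabilityMeasure μ]
  {σm σp : ℝ} {q : X → X → ℝ}

lemma nseq_zero (g : ℕ → X → ℝ) (x : X) : Nseq μ q g x 0 = 1 := by
  simp [Nseq]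

lemma nseq_congr {g g' : ℕ → X → ℝ} (h : ∀ k, 1 ≤ k → g k = g' k) (x : X) (n : ℕ) :
    Nseq μ q g x n = Nseq μ q g' x n := by
  rw [Nseq, Nseq]
  apply integral_congr_ae
  apply Filter.Eventually.of_forall
  intro xs
  apply Finset.prod_congr rfl
  intro k _
  rw [h ((k : ℕ) + 1) (by omega)]

-- measurability of the big integrand
lemma bigprod_meas (hq : Measurable (Function.uncurry q)) (g : ℕ → X → ℝ)
    (hg : Fam μ g) (x : X) (n : ℕ) :
    Measurable (fun xs : Fin n → X =>
      ∏ k : Fin n,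
        q (if (k : ℕ) = 0 then x
           else xs ⟨(k : ℕ) - 1, Nat.lt_of_le_of_lt (Nat.sub_le _ _) k.isLt⟩) (xs k) *
          g ((k : ℕ) + 1) (xs k)) := by
  apply Finset.measurable_prod
  intro k _
  have hprev : Measurable (fun xs : Fin n → X =>
      (if (k : ℕ) = 0 then x
       else xs ⟨(k : ℕ) - 1, Nat.lt_of_le_of_lt (Nat.sub_le _ _) k.isLt⟩)) := by
    split_ifs
    · exact measurable_const
    · exact measurable_pi_apply _
  exact (hq.comp (hprev.prodMk (measurable_pi_apply k))).mul
    (((hg _ (by omega)).1).comp (measurable_pi_apply _))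

-- integrability of the big integrand over the pi measure
lemma bigprod_int (hσm : 0 < σm) (hσ : σm ≤ σp) (hq : Measurable (Function.uncurry q))
    (hql : ∀ a b, σm ≤ q a b) (hqu : ∀ a b, q a b ≤ σp)
    (g : ℕ → X → ℝ) (hg : Fam μ g) (x : X) (n : ℕ) :
    Integrable (fun xs : Fin n → X =>
      ∏ k : Fin n,
        q (if (k : ℕ) = 0 then x
           else xs ⟨(k : ℕ) - 1, Nat.lt_of_le_of_lt (Nat.sub_le _ _) k.isLt⟩) (xs k) *
          g ((k : ℕ) + 1) (xs k)) (Measure.pi fun _ => μ) := by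
  letI : MeasureSpace X := ⟨μ⟩
  have hvol : (Measure.pi fun _ : Fin n => μ) = (volume : Measure (Fin n → X)) := by
    rw [volume_pi]; rfl
  rw [hvol]
  have hdom : Integrable (fun xs : Fin n → X => σp ^ n * ∏ k : Fin n, g ((k : ℕ) + 1) (xs k))
      (volume : Measure (Fin n → X)) := by
    exact (Integrable.fin_nat_prod (fun i => (hg _ (by omega)).2.2.1)).const_mul _
  apply hdom.mono
  · rw [← hvol]
    exact (bigprod_meas hq g hg x n).aestronglyMeasurable
  · apply Filter.Eventually.of_forall
    intro xs
    have h0 : ∀ k : Fin n, 0 ≤ q (if (k : ℕ) = 0 then x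
           else xs ⟨(k : ℕ) - 1, Nat.lt_of_le_of_lt (Nat.sub_le _ _) k.isLt⟩) (xs k) *
          g ((k : ℕ) + 1) (xs k) := fun k =>
      mul_nonneg (le_trans hσm.le (hql _ _)) ((hg _ (by omega)).2.1 _)
    rw [Real.norm_eq_abs, Real.norm_eq_abs, abs_of_nonneg (Finset.prod_nonneg fun k _ => h0 k)]
    have hb : (∏ k : Fin n,
        q (if (k : ℕ) = 0 then x
           else xs ⟨(k : ℕ) - 1, Nat.lt_of_le_of_lt (Nat.sub_le _ _) k.isLt⟩) (xs k) *
          g ((k : ℕ) + 1) (xs k)) ≤ ∏ k : Fin n, σp * g ((k : ℕ) + 1) (xs k) := by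
      apply Finset.prod_le_prod (fun k _ => h0 k)
      intro k _
      exact mul_le_mul_of_nonneg_right (hqu _ _) ((hg _ (by omega)).2.1 _)
    calc _ ≤ ∏ k : Fin n, σp * g ((k : ℕ) + 1) (xs k) := hb
    _ = σp ^ n * ∏ k : Fin n, g ((k : ℕ) + 1) (xs k) := by
        rw [Finset.prod_mul_distrib, Finset.prod_const]; simp
    _ ≤ |σp ^ n * ∏ k : Fin n, g ((k : ℕ) + 1) (xs k)| := le_abs_self _

lemma nseq_succ (hσm : 0 < σm) (hσ : σm ≤ σp) (hq : Measurable (Function.uncurry q))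
    (hql : ∀ a b, σm ≤ q a b) (hqu : ∀ a b, q a b ≤ σp)
    (g : ℕ → X → ℝ) (hg : Fam μ g) (x : X) (n : ℕ) :
    Nseq μ q g x (n + 1) = ∫ y, q x y * (g 1 y * Nseq μ q (shf g) y n) ∂μ := by
  have hmp := (measurePreserving_piFinSuccAbove (fun _ : Fin (n+1) => (μ : Measure X)) 0).symm
  rw [Nseq, ← hmp.integral_comp (MeasurableEquiv.measurableEmbedding _)]
  have key : ∀ (z : X × (Fin n → X)),
      (∏ k : Fin (n+1),
        q (if (k : ℕ) = 0 then x
           else ((MeasurableEquiv.piFinSuccAbove (fun _ => X) 0).symm z) ⟨(k : ℕ) - 1, Nat.lt_of_le_of_lt (Nat.sub_le _ _) k.isLt⟩)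
          (((MeasurableEquiv.piFinSuccAbove (fun _ => X) 0).symm z) k) *
          g ((k : ℕ) + 1) (((MeasurableEquiv.piFinSuccAbove (fun _ => X) 0).symm z) k))
      = (q x z.1 * g 1 z.1) *
        ∏ k : Fin n,
          q (if (k : ℕ) = 0 then z.1
             else z.2 ⟨(k : ℕ) - 1, Nat.lt_of_le_of_lt (Nat.sub_le _ _) k.isLt⟩) (z.2 k) *
            shf g ((k : ℕ) + 1) (z.2 k) := by
    rintro ⟨y, ys⟩
    have hxs : ((MeasurableEquiv.piFinSuccAbove (fun _ : Fin (n+1) => X) 0).symm (y, ys)) = Fin.cons y ys := by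
      simp [MeasurableEquiv.piFinSuccAbove, Fin.insertNthEquiv, Fin.insertNth_zero']
    rw [hxs, Fin.prod_univ_succ]
    simp only [Fin.cons_zero, Fin.val_zero, if_pos rfl, Fin.cons_succ, Fin.val_succ]
    congr 1
    apply Finset.prod_congr rfl
    intro k _
    simp only [Nat.succ_ne_zero, if_false, Nat.add_sub_cancel]
    congr 2
    · rcases Nat.eq_zero_or_pos (k : ℕ) with h0 | hpos
      · rw [if_pos h0]
        have : (⟨(k : ℕ), by omega⟩ : Fin (n+1)) = 0 := by ext; simp [h0]
        rw [this, Fin.cons_zero]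
      · rw [if_neg (by omega)]
        have : (⟨(k : ℕ), by omega⟩ : Fin (n+1)) =
            Fin.succ ⟨(k : ℕ) - 1, by omega⟩ := by ext; simp; omega
        rw [this, Fin.cons_succ]
  simp only [key]
  have hint0 : Integrable ((fun xs : Fin (n+1) → X => ∏ k : Fin (n+1),
        q (if (k : ℕ) = 0 then x
           else xs ⟨(k : ℕ) - 1, Nat.lt_of_le_of_lt (Nat.sub_le _ _) k.isLt⟩) (xs k) *
          g ((k : ℕ) + 1) (xs k)) ∘ (⇑(MeasurableEquiv.piFinSuccAbove (fun _ => X) 0).symm))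
      (μ.prod (Measure.pi fun _ => μ)) := by
    rw [hmp.integrable_comp_emb (MeasurableEquiv.measurableEmbedding _)]
    exact bigprod_int hσm hσ hq hql hqu g hg x (n + 1)
  have hint : Integrable (fun z : X × (Fin n → X) =>
      (q x z.1 * g 1 z.1) *
        ∏ k : Fin n,
          q (if (k : ℕ) = 0 then z.1
             else z.2 ⟨(k : ℕ) - 1, Nat.lt_of_le_of_lt (Nat.sub_le _ _) k.isLt⟩) (z.2 k) *
            shf g ((k : ℕ) + 1) (z.2 k)) (μ.prod (Measure.pi fun _ => μ)) :=
    hint0.congr (Filter.Eventually.of_forall fun z => key z)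
  rw [MeasureTheory.integral_prod _ hint]
  simp only [mul_assoc, MeasureTheory.integral_const_mul]
  simp only [Nseq, shf]

variable (hσm : 0 < σm) (hσ : σm ≤ σp) (hq : Measurable (Function.uncurry q))
  (hql : ∀ a b, σm ≤ q a b) (hqu : ∀ a b, q a b ≤ σp)

include hσm hσ hql hqu in
lemma q_abs_le : ∀ a b, |q a b| ≤ σp := fun a b =>
  abs_le.2 ⟨by nlinarith [hql a b], hqu a b⟩

include hq in
lemma q_meas_left (w : X) : Measurable (q w) :=
  hq.comp (measurable_const.prodMk measurable_id)

include hσm hσ hq hql hqu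

lemma nseq_meas : ∀ (n : ℕ) (g : ℕ → X → ℝ), Fam μ g →
    Measurable (fun y : X => Nseq μ q g y n) := by
  intro n
  induction n with
  | zero => intro g hg; simp only [nseq_zero]; exact measurable_const
  | succ n IH =>
      intro g hg
      have heq : (fun y : X => Nseq μ q g y (n + 1)) =
          fun y : X => ∫ z, q y z * (g 1 z * Nseq μ q (shf g) z n) ∂μ := by
        funext y; exact nseq_succ hσm hσ hq hql hqu g hg y n
      rw [heq]
      have hm : Measurable (fun p : X × X => q p.1 p.2 * (g 1 p.2 * Nseq μ q (shf g) p.2 n)) :=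
        hq.mul (((hg 1 le_rfl).1.comp measurable_snd).mul
          ((IH (shf g) hg.shf).comp measurable_snd))
      exact hm.stronglyMeasurable.integral_prod_right'.measurable

lemma nseq_bounds : ∀ (n : ℕ) (g : ℕ → X → ℝ), Fam μ g → ∀ x,
    σm ^ n * Pg μ g n ≤ Nseq μ q g x n ∧ Nseq μ q g x n ≤ σp ^ n * Pg μ g n := by
  intro n
  induction n with
  | zero => intro g hg x; simp [nseq_zero, Pg]
  | succ n IH =>
      intro g hg x
      have hσp : (0:ℝ) < σp := lt_of_lt_of_le hσm hσ
      have hg1 := hg 1 le_rfl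
      have hPg : 0 < Pg μ (shf g) n := Pg_pos hg.shf n
      have hNm := nseq_meas hσm hσ hq hql hqu n (shf g) hg.shf
      have hlow : ∀ y, σm ^ n * Pg μ (shf g) n ≤ Nseq μ q (shf g) y n :=
        fun y => (IH (shf g) hg.shf y).1
      have hup : ∀ y, Nseq μ q (shf g) y n ≤ σp ^ n * Pg μ (shf g) n :=
        fun y => (IH (shf g) hg.shf y).2
      have hN0 : ∀ y, 0 ≤ Nseq μ q (shf g) y n :=
        fun y => le_trans (by positivity) (hlow y)
      -- integrability of the main integrand
      have hint : Integrable (fun y => q x y * (g 1 y * Nseq μ q (shf g) y n)) μ := by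
        have : Integrable (fun y => (q x y * Nseq μ q (shf g) y n) * g 1 y) μ := by
          apply int_mul_W (h := fun y => q x y * Nseq μ q (shf g) y n) hg1.2.2.1 ((q_meas_left hq x).mul hNm)
          intro y
          rw [abs_of_nonneg (mul_nonneg (le_trans hσm.le (hql x y)) (hN0 y))]
          calc q x y * Nseq μ q (shf g) y n ≤ σp * (σp ^ n * Pg μ (shf g) n) :=
            mul_le_mul (hqu x y) (hup y) (hN0 y) hσp.le
          _ = σp ^ (n+1) * Pg μ (shf g) n := by ring
          _ ≤ |σp ^ (n+1) * Pg μ (shf g) n| := le_abs_self _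
        exact this.congr (Filter.Eventually.of_forall fun y => by ring)
      rw [nseq_succ hσm hσ hq hql hqu g hg x n, Pg_succ]
      constructor
      · have heq : σm ^ (n+1) * (Pg μ (shf g) n * ∫ y, g 1 y ∂μ) =
            ∫ y, (g 1 y * (σm ^ n * Pg μ (shf g) n)) * σm ∂μ := by
          rw [MeasureTheory.integral_mul_const, MeasureTheory.integral_mul_const]
          ring
        rw [heq]
        apply integral_mono ((hg1.2.2.1.mul_const _).mul_const _) hint
        intro y
        have h1 : g 1 y * (σm ^ n * Pg μ (shf g) n) ≤ g 1 y * Nseq μ q (shf g) y n :=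
          mul_le_mul_of_nonneg_left (hlow y) (hg1.2.1 y)
        have h2 : (g 1 y * Nseq μ q (shf g) y n) * σm ≤ (g 1 y * Nseq μ q (shf g) y n) * q x y :=
          mul_le_mul_of_nonneg_left (hql x y) (mul_nonneg (hg1.2.1 y) (hN0 y))
        calc (g 1 y * (σm ^ n * Pg μ (shf g) n)) * σm ≤ (g 1 y * Nseq μ q (shf g) y n) * σm :=
          mul_le_mul_of_nonneg_right h1 hσm.le
        _ ≤ (g 1 y * Nseq μ q (shf g) y n) * q x y := h2
        _ = q x y * (g 1 y * Nseq μ q (shf g) y n) := by ring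
      · have heq : σp ^ (n+1) * (Pg μ (shf g) n * ∫ y, g 1 y ∂μ) =
            ∫ y, (g 1 y * (σp ^ n * Pg μ (shf g) n)) * σp ∂μ := by
          rw [MeasureTheory.integral_mul_const, MeasureTheory.integral_mul_const]
          ring
        rw [heq]
        apply integral_mono hint ((hg1.2.2.1.mul_const _).mul_const _)
        intro y
        have h1 : g 1 y * Nseq μ q (shf g) y n ≤ g 1 y * (σp ^ n * Pg μ (shf g) n) :=
          mul_le_mul_of_nonneg_left (hup y) (hg1.2.1 y)
        calc q x y * (g 1 y * Nseq μ q (shf g) y n)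
            = (g 1 y * Nseq μ q (shf g) y n) * q x y := by ring
        _ ≤ (g 1 y * Nseq μ q (shf g) y n) * σp :=
          mul_le_mul_of_nonneg_left (hqu x y) (mul_nonneg (hg1.2.1 y) (hN0 y))
        _ ≤ (g 1 y * (σp ^ n * Pg μ (shf g) n)) * σp := mul_le_mul_of_nonneg_right h1 hσp.le

lemma nseq_pos (n : ℕ) (g : ℕ → X → ℝ) (hg : Fam μ g) (x : X) : 0 < Nseq μ q g x n := by
  have := (nseq_bounds hσm hσ hq hql hqu n g hg x).1
  have h1 : 0 < σm ^ n * Pg μ g n := by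
    have := Pg_pos hg n; positivity
  linarith


/-- The fundamental one-step lemma about normalized integral operators with a
kernel bounded between `σm` and `σp`: values stay inside `[a,b]`, and the
oscillation contracts by the factor `1 - σm/σp`. -/
lemma Tlem {W f : X → ℝ} (hWm : Measurable W) (hW0 : ∀ y, 0 ≤ W y)
    (hWi : Integrable W μ) (hWpos : 0 < ∫ y, W y ∂μ) (hfm : Measurable f)
    {a b : ℝ} (ha : 0 ≤ a) (hfa : ∀ y, a ≤ f y) (hfb : ∀ y, f y ≤ b) :
    (∀ w, a ≤ (∫ y, q w y * W y * f y ∂μ) / (∫ y, q w y * W y ∂μ)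
      ∧ (∫ y, q w y * W y * f y ∂μ) / (∫ y, q w y * W y ∂μ) ≤ b)
    ∧ ∀ w w', (∫ y, q w y * W y * f y ∂μ) / (∫ y, q w y * W y ∂μ)
        - (∫ y, q w' y * W y * f y ∂μ) / (∫ y, q w' y * W y ∂μ)
        ≤ (1 - σm / σp) * (b - a) := by
  have hσp : (0:ℝ) < σp := lt_of_lt_of_le hσm hσ
  set S := ∫ y, W y ∂μ with hS
  have hq0 : ∀ u v, 0 ≤ q u v := fun u v => le_trans hσm.le (hql u v)
  -- integrability of q·W
  have hqWi : ∀ w, Integrable (fun y => q w y * W y) μ := fun w =>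
    int_mul_W hWi (q_meas_left hq w) (fun y => q_abs_le hσm hσ hql hqu w y)
  -- bounds on B w = ∫ q W
  have hBlow : ∀ w, σm * S ≤ ∫ y, q w y * W y ∂μ := by
    intro w
    have : ∫ y, σm * W y ∂μ = σm * S := by rw [MeasureTheory.integral_const_mul]
    rw [← this]
    apply integral_mono (hWi.const_mul σm) (hqWi w)
    intro y
    exact mul_le_mul_of_nonneg_right (hql w y) (hW0 y)
  have hBup : ∀ w, ∫ y, q w y * W y ∂μ ≤ σp * S := by
    intro w
    have : ∫ y, σp * W y ∂μ = σp * S := by rw [MeasureTheory.integral_const_mul]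
    rw [← this]
    apply integral_mono (hqWi w) (hWi.const_mul σp)
    intro y
    exact mul_le_mul_of_nonneg_right (hqu w y) (hW0 y)
  have hBpos : ∀ w, 0 < ∫ y, q w y * W y ∂μ := fun w =>
    lt_of_lt_of_le (by positivity) (hBlow w)
  -- integrability of q·W·f and variants
  have hba : ∀ (w : X), a ≤ b := fun w => le_trans (hfa w) (hfb w)
  have habsf : ∀ y, |f y| ≤ b := fun y =>
    abs_le.2 ⟨by linarith [hfa y, hfb y, ha], hfb y⟩
  have hqWfi : ∀ w, Integrable (fun y => q w y * W y * f y) μ := by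
    intro w
    have : Integrable (fun y => (q w y * f y) * W y) μ := by
      apply int_mul_W (h := fun y => q w y * f y) hWi ((q_meas_left hq w).mul hfm)
      intro y
      rw [abs_mul]
      calc |q w y| * |f y| ≤ σp * b :=
        mul_le_mul (q_abs_le hσm hσ hql hqu w y) (habsf y) (abs_nonneg _)  hσp.le
      _ ≤ |σp * b| := le_abs_self _
    exact this.congr (Filter.Eventually.of_forall fun y => by ring)
  -- part 1 : bounds
  have part1 : ∀ w, a ≤ (∫ y, q w y * W y * f y ∂μ) / (∫ y, q w y * W y ∂μ)
      ∧ (∫ y, q w y * W y * f y ∂μ) / (∫ y, q w y * W y ∂μ) ≤ b := by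
    intro w
    constructor
    · rw [le_div_iff₀ (hBpos w)]
      have : a * ∫ y, q w y * W y ∂μ = ∫ y, (q w y * W y) * a ∂μ := by
        rw [MeasureTheory.integral_mul_const]; ring
      rw [this]
      apply integral_mono ((hqWi w).mul_const a) (hqWfi w)
      intro y
      exact mul_le_mul_of_nonneg_left (hfa y) (mul_nonneg (hq0 w y) (hW0 y))
    · rw [div_le_iff₀ (hBpos w)]
      have : b * ∫ y, q w y * W y ∂μ = ∫ y, (q w y * W y) * b ∂μ := by
        rw [MeasureTheory.integral_mul_const]; ring
      rw [this]
      apply integral_mono (hqWfi w) ((hqWi w).mul_const b)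
      intro y
      exact mul_le_mul_of_nonneg_left (hfb y) (mul_nonneg (hq0 w y) (hW0 y))
  refine ⟨part1, ?_⟩
  intro w w'
  -- the shifted function u = f - a
  set u : X → ℝ := fun y => f y - a with hu
  have hu0 : ∀ y, 0 ≤ u y := fun y => by simp [hu]; linarith [hfa y]
  have hub : ∀ y, u y ≤ b - a := fun y => by simp [hu]; linarith [hfb y]
  have hum : Measurable u := hfm.sub measurable_const
  have hWui : Integrable (fun y => u y * W y) μ := by
    apply int_mul_W hWi hum
    intro y
    rw [abs_of_nonneg (hu0 y)]
    exact le_trans (hub y) (le_abs_self _)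
  have hqWui : ∀ w, Integrable (fun y => q w y * W y * u y) μ := by
    intro w
    have : Integrable (fun y => (q w y * u y) * W y) μ := by
      apply int_mul_W (h := fun y => q w y * u y) hWi ((q_meas_left hq w).mul hum)
      intro y
      rw [abs_mul, abs_of_nonneg (hu0 y)]
      calc |q w y| * u y ≤ σp * (b - a) :=
        mul_le_mul (q_abs_le hσm hσ hql hqu w y) (hub y) (hu0 y) hσp.le
      _ ≤ |σp * (b - a)| := le_abs_self _
    exact this.congr (Filter.Eventually.of_forall fun y => by ring)
  set E := ∫ y, u y * W y ∂μ with hE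
  have hE0 : 0 ≤ E := integral_nonneg fun y => mul_nonneg (hu0 y) (hW0 y)
  -- decomposition A = A₀ + a B
  have hdecomp : ∀ w, ∫ y, q w y * W y * f y ∂μ =
      (∫ y, q w y * W y * u y ∂μ) + a * ∫ y, q w y * W y ∂μ := by
    intro w
    have : (fun y => q w y * W y * f y) =
        fun y => q w y * W y * u y + (q w y * W y) * a := by
      funext y; simp [hu]; ring
    rw [this, integral_add (hqWui w) ((hqWi w).mul_const a),
      MeasureTheory.integral_mul_const]
    ring
  have hBw := hBpos w
  have hBw' := hBpos w'
  have hSpos : 0 < S := hWpos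
  have hcw_le : σm * (∫ y, q w y * W y ∂μ) / (σp * S) ≤ σm := by
    rw [div_le_iff₀ (by positivity)]
    exact mul_le_mul_of_nonneg_left (hBup w) hσm.le
  have h1 : (∫ y, q w y * W y * u y ∂μ) - (σm * (∫ y, q w y * W y ∂μ) / (σp * S)) * E
      ≤ (b - a) * ((∫ y, q w y * W y ∂μ) - (σm * (∫ y, q w y * W y ∂μ) / (σp * S)) * S) := by
    set c := σm * (∫ y, q w y * W y ∂μ) / (σp * S) with hc
    have hc0 : 0 ≤ c := by
      rw [hc]
      exact div_nonneg (mul_nonneg hσm.le hBw.le) (by positivity)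
    have hlhs : (∫ y, q w y * W y * u y ∂μ) - c * E = ∫ y, (q w y - c) * (W y * u y) ∂μ := by
      have hfe : (fun y => (q w y - c) * (W y * u y)) =
          fun y => q w y * W y * u y - c * (u y * W y) := by funext y; ring
      rw [hfe, integral_sub (hqWui w) (hWui.const_mul c), MeasureTheory.integral_const_mul]
    have hrhs : (b - a) * ((∫ y, q w y * W y ∂μ) - c * S) = ∫ y, (q w y - c) * (W y * (b - a)) ∂μ := by
      have hfe : (fun y => (q w y - c) * (W y * (b - a))) =
          fun y => (q w y * W y) * (b-a) - (c * (b-a)) * W y := by funext y; ring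
      rw [hfe, integral_sub ((hqWi w).mul_const _) (hWi.const_mul _),
        MeasureTheory.integral_mul_const, MeasureTheory.integral_const_mul]
      ring
    rw [hlhs, hrhs]
    have hint1 : Integrable (fun y => (q w y - c) * (W y * u y)) μ := by
      have hfe : (fun y => (q w y - c) * (W y * u y)) =
          fun y => q w y * W y * u y - c * (u y * W y) := by funext y; ring
      rw [hfe]; exact (hqWui w).sub (hWui.const_mul c)
    have hint2 : Integrable (fun y => (q w y - c) * (W y * (b - a))) μ := by
      have hfe : (fun y => (q w y - c) * (W y * (b - a))) =
          fun y => (q w y * W y) * (b-a) - (c * (b-a)) * W y := by funext y; ring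
      rw [hfe]; exact ((hqWi w).mul_const _).sub (hWi.const_mul _)
    apply integral_mono hint1 hint2
    intro y
    have hqc : 0 ≤ q w y - c := by linarith [hql w y, hcw_le]
    exact mul_le_mul_of_nonneg_left (mul_le_mul_of_nonneg_left (hub y) (hW0 y)) hqc
  have h2 : σm * E ≤ ∫ y, q w' y * W y * u y ∂μ := by
    have hfe : ∫ y, (u y * W y) * σm ∂μ = σm * E := by
      rw [MeasureTheory.integral_mul_const]; ring
    rw [← hfe]
    apply integral_mono (hWui.mul_const σm) (hqWui w')
    intro y
    calc (u y * W y) * σm ≤ (u y * W y) * q w' y :=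
      mul_le_mul_of_nonneg_left (hql w' y) (mul_nonneg (hu0 y) (hW0 y))
    _ = q w' y * W y * u y := by ring
  have hkey1 : (∫ y, q w y * W y * u y ∂μ) / (∫ y, q w y * W y ∂μ)
      ≤ (b - a) * (1 - σm / σp) + (σm / (σp * S)) * E := by
    rw [div_le_iff₀ hBw]
    have expand : ((b - a) * (1 - σm / σp) + (σm / (σp * S)) * E) * (∫ y, q w y * W y ∂μ)
        = (b - a) * ((∫ y, q w y * W y ∂μ) - (σm * (∫ y, q w y * W y ∂μ) / (σp * S)) * S)
          + (σm * (∫ y, q w y * W y ∂μ) / (σp * S)) * E := by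
      field_simp
    rw [expand]
    linarith [h1]
  have hkey2 : (σm / (σp * S)) * E ≤ (∫ y, q w' y * W y * u y ∂μ) / (∫ y, q w' y * W y ∂μ) := by
    rw [le_div_iff₀ hBw']
    have ha0 : 0 ≤ σm / (σp * S) * E := mul_nonneg (by positivity) hE0
    have hmul : σm / (σp * S) * E * (∫ y, q w' y * W y ∂μ) ≤ σm / (σp * S) * E * (σp * S) :=
      mul_le_mul_of_nonneg_left (hBup w') ha0
    have hfe : σm / (σp * S) * E * (σp * S) = σm * E := by
      field_simp
    linarith [h2]
  have hABw : (∫ y, q w y * W y * f y ∂μ) / (∫ y, q w y * W y ∂μ)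
      = (∫ y, q w y * W y * u y ∂μ) / (∫ y, q w y * W y ∂μ) + a := by
    rw [hdecomp w, add_div, mul_div_assoc, div_self hBw.ne', mul_one]
  have hABw' : (∫ y, q w' y * W y * f y ∂μ) / (∫ y, q w' y * W y ∂μ)
      = (∫ y, q w' y * W y * u y ∂μ) / (∫ y, q w' y * W y ∂μ) + a := by
    rw [hdecomp w', add_div, mul_div_assoc, div_self hBw'.ne', mul_one]
  rw [hABw, hABw']
  have : (1 - σm / σp) * (b - a) = (b - a) * (1 - σm / σp) := by ring
  rw [this]
  linarith [hkey1, hkey2]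


lemma ratio_eq (g : ℕ → X → ℝ) (hg : Fam μ g) (j : ℕ) (w : X) :
    Nseq μ q g w (j+2) / Nseq μ q g w (j+1)
    = (∫ y, q w y * (g 1 y * Nseq μ q (shf g) y j) *
          (Nseq μ q (shf g) y (j+1) / Nseq μ q (shf g) y j) ∂μ)
      / (∫ y, q w y * (g 1 y * Nseq μ q (shf g) y j) ∂μ) := by
  have hnum : Nseq μ q g w (j+2) = ∫ y, q w y * (g 1 y * Nseq μ q (shf g) y j) *
      (Nseq μ q (shf g) y (j+1) / Nseq μ q (shf g) y j) ∂μ := by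
    rw [nseq_succ hσm hσ hq hql hqu g hg w (j+1)]
    apply integral_congr_ae
    apply Filter.Eventually.of_forall
    intro y
    have h0 : Nseq μ q (shf g) y j ≠ 0 :=
      (nseq_pos hσm hσ hq hql hqu j (shf g) hg.shf y).ne'
    field_simp
  have hden : Nseq μ q g w (j+1) = ∫ y, q w y * (g 1 y * Nseq μ q (shf g) y j) ∂μ :=
    nseq_succ hσm hσ hq hql hqu g hg w j
  rw [hnum, hden]

/-- One application of `Tlem` to the ratio functions. -/
lemma step_aux (g : ℕ → X → ℝ) (hg : Fam μ g) (j : ℕ) {a b : ℝ} (ha : 0 ≤ a)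
    (hfa : ∀ y, a ≤ Nseq μ q (shf g) y (j+1) / Nseq μ q (shf g) y j)
    (hfb : ∀ y, Nseq μ q (shf g) y (j+1) / Nseq μ q (shf g) y j ≤ b) :
    (∀ w, a ≤ Nseq μ q g w (j+2) / Nseq μ q g w (j+1)
       ∧ Nseq μ q g w (j+2) / Nseq μ q g w (j+1) ≤ b)
    ∧ (∀ w w', Nseq μ q g w (j+2) / Nseq μ q g w (j+1)
        - Nseq μ q g w' (j+2) / Nseq μ q g w' (j+1) ≤ (1 - σm/σp) * (b - a)) := by
  have hg1 := hg 1 le_rfl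
  have hNm := nseq_meas hσm hσ hq hql hqu j (shf g) hg.shf
  have hNm1 := nseq_meas hσm hσ hq hql hqu (j+1) (shf g) hg.shf
  have hNlow : ∀ y, σm ^ j * Pg μ (shf g) j ≤ Nseq μ q (shf g) y j :=
    fun y => (nseq_bounds hσm hσ hq hql hqu j (shf g) hg.shf y).1
  have hNup : ∀ y, Nseq μ q (shf g) y j ≤ σp ^ j * Pg μ (shf g) j :=
    fun y => (nseq_bounds hσm hσ hq hql hqu j (shf g) hg.shf y).2
  have hN0 : ∀ y, 0 ≤ Nseq μ q (shf g) y j :=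
    fun y => (nseq_pos hσm hσ hq hql hqu j (shf g) hg.shf y).le
  have hPg : 0 < Pg μ (shf g) j := Pg_pos hg.shf j
  have hσp : (0:ℝ) < σp := lt_of_lt_of_le hσm hσ
  -- W facts
  have hWm : Measurable (fun y => g 1 y * Nseq μ q (shf g) y j) := hg1.1.mul hNm
  have hW0 : ∀ y, 0 ≤ g 1 y * Nseq μ q (shf g) y j :=
    fun y => mul_nonneg (hg1.2.1 y) (hN0 y)
  have hWi : Integrable (fun y => g 1 y * Nseq μ q (shf g) y j) μ := by
    have h1 : Integrable (fun y => Nseq μ q (shf g) y j * g 1 y) μ := by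
      apply int_mul_W hg1.2.2.1 hNm
      intro y
      rw [abs_of_nonneg (hN0 y)]
      exact hNup y
    exact h1.congr (Filter.Eventually.of_forall fun y => mul_comm _ _)
  have hWpos : 0 < ∫ y, g 1 y * Nseq μ q (shf g) y j ∂μ := by
    have h1 : ∫ y, g 1 y * (σm ^ j * Pg μ (shf g) j) ∂μ
        ≤ ∫ y, g 1 y * Nseq μ q (shf g) y j ∂μ := by
      apply integral_mono (hg1.2.2.1.mul_const _) hWi
      intro y
      exact mul_le_mul_of_nonneg_left (hNlow y) (hg1.2.1 y)
    have h2 : ∫ y, g 1 y * (σm ^ j * Pg μ (shf g) j) ∂μ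
        = (∫ y, g 1 y ∂μ) * (σm ^ j * Pg μ (shf g) j) := MeasureTheory.integral_mul_const _ _
    have h3 : 0 < (∫ y, g 1 y ∂μ) * (σm ^ j * Pg μ (shf g) j) := by
      apply mul_pos hg1.2.2.2
      positivity
    linarith
  have hfm : Measurable (fun y => Nseq μ q (shf g) y (j+1) / Nseq μ q (shf g) y j) :=
    hNm1.div hNm
  have hT := Tlem hσm hσ hq hql hqu hWm hW0 hWi hWpos hfm ha hfa hfb
  constructor
  · intro w
    rw [ratio_eq hσm hσ hq hql hqu g hg j w]
    exact hT.1 w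
  · intro w w'
    rw [ratio_eq hσm hσ hq hql hqu g hg j w, ratio_eq hσm hσ hq hql hqu g hg j w']
    exact hT.2 w w'

/-- Core contraction lemma. -/
lemma core : ∀ (j : ℕ) (g : ℕ → X → ℝ), Fam μ g →
    (∀ w, σm * (∫ y, g (j+1) y ∂μ) ≤ Nseq μ q g w (j+1) / Nseq μ q g w j) ∧
    (∀ w, Nseq μ q g w (j+1) / Nseq μ q g w j ≤ σp * (∫ y, g (j+1) y ∂μ)) ∧
    (∀ w w', Nseq μ q g w (j+1) / Nseq μ q g w j - Nseq μ q g w' (j+1) / Nseq μ q g w' j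
        ≤ (1 - σm/σp) ^ j * ((σp - σm) * ∫ y, g (j+1) y ∂μ)) := by
  intro j
  induction j with
  | zero =>
      intro g hg
      have hg1 := hg 1 le_rfl
      have hσp : (0:ℝ) < σp := lt_of_lt_of_le hσm hσ
      have hone : ∀ w : X, Nseq μ q g w 1 = ∫ y, q w y * g 1 y ∂μ := by
        intro w
        rw [nseq_succ hσm hσ hq hql hqu g hg w 0]
        apply integral_congr_ae
        apply Filter.Eventually.of_forall
        intro y
        show q w y * (g 1 y * Nseq μ q (shf g) y 0) = q w y * g 1 y
        rw [nseq_zero (shf g) y, mul_one]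
      have hqm : ∀ w : X, Measurable (q w) :=
        fun w => hq.comp (measurable_const.prodMk measurable_id)
      have hqgi : ∀ w : X, Integrable (fun y => q w y * g 1 y) μ := by
        intro w
        apply int_mul_W hg1.2.2.1 (hqm w)
        intro y
        exact abs_le.2 ⟨by nlinarith [hql w y], hqu w y⟩
      refine ⟨?_, ?_, ?_⟩
      · intro w
        rw [nseq_zero g w, div_one, hone w]
        have : σm * ∫ y, g (0+1) y ∂μ = ∫ y, σm * g 1 y ∂μ := by
          rw [MeasureTheory.integral_const_mul]
        rw [this]
        apply integral_mono (hg1.2.2.1.const_mul _) (hqgi w)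
        intro y
        exact mul_le_mul_of_nonneg_right (hql w y) (hg1.2.1 y)
      · intro w
        rw [nseq_zero g w, div_one, hone w]
        have : σp * ∫ y, g (0+1) y ∂μ = ∫ y, σp * g 1 y ∂μ := by
          rw [MeasureTheory.integral_const_mul]
        rw [this]
        apply integral_mono (hqgi w) (hg1.2.2.1.const_mul _)
        intro y
        exact mul_le_mul_of_nonneg_right (hqu w y) (hg1.2.1 y)
      · intro w w'
        rw [nseq_zero g w, nseq_zero g w', div_one, div_one, hone w, hone w',
          ← integral_sub (hqgi w) (hqgi w')]
        have hrhs : (1 - σm/σp) ^ 0 * ((σp - σm) * ∫ y, g (0+1) y ∂μ)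
            = ∫ y, (σp - σm) * g 1 y ∂μ := by
          rw [MeasureTheory.integral_const_mul, pow_zero, one_mul]
        rw [hrhs]
        apply integral_mono ((hqgi w).sub (hqgi w')) (hg1.2.2.1.const_mul _)
        intro y
        simp only [Pi.sub_apply]
        have := hg1.2.1 y
        nlinarith [hql w' y, hqu w y]
  | succ j IH =>
      intro g hg
      have IHs := IH (shf g) hg.shf
      have hσp : (0:ℝ) < σp := lt_of_lt_of_le hσm hσ
      have hIpos : 0 < ∫ y, shf g (j+1) y ∂μ := (hg.shf (j+1) (by omega)).2.2.2
      have hb := step_aux hσm hσ hq hql hqu g hg j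
        (a := σm * ∫ y, shf g (j+1) y ∂μ) (b := σp * ∫ y, shf g (j+1) y ∂μ)
        (by positivity) IHs.1 IHs.2.1
      refine ⟨fun w => (hb.1 w).1, fun w => (hb.1 w).2, ?_⟩
      intro w w'
      -- oscillation contraction via the sInf trick
      have hne : Nonempty X := ⟨w⟩
      set φ : X → ℝ := fun y => Nseq μ q (shf g) y (j+1) / Nseq μ q (shf g) y j with hφ
      have hlow : ∀ y, σm * (∫ y, shf g (j+1) y ∂μ) ≤ φ y := IHs.1
      have hosc := IHs.2.2
      set c := (1 - σm/σp) ^ j * ((σp - σm) * ∫ y, shf g (j+1) y ∂μ) with hc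
      have hbdd : BddBelow (Set.range φ) :=
        ⟨σm * ∫ y, shf g (j+1) y ∂μ, by rintro v ⟨y, rfl⟩; exact hlow y⟩
      have haStar_ge : σm * (∫ y, shf g (j+1) y ∂μ) ≤ sInf (Set.range φ) :=
        le_csInf (Set.range_nonempty φ) (by rintro v ⟨y, rfl⟩; exact hlow y)
      have haStar0 : 0 ≤ sInf (Set.range φ) := le_trans (by positivity) haStar_ge
      have hφa : ∀ y, sInf (Set.range φ) ≤ φ y := fun y => csInf_le hbdd ⟨y, rfl⟩
      have hφb : ∀ y, φ y ≤ sInf (Set.range φ) + c := by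
        intro y
        have h1 : φ y - c ≤ sInf (Set.range φ) := by
          apply le_csInf (Set.range_nonempty φ)
          rintro v ⟨y', rfl⟩
          linarith [hosc y y']
        linarith
      have hstep := (step_aux hσm hσ hq hql hqu g hg j haStar0 hφa hφb).2 w w'
      show _ ≤ (1 - σm/σp) ^ (j+1) * ((σp - σm) * ∫ y, shf g (j+1) y ∂μ)
      have heq : (1 - σm/σp) * ((sInf (Set.range φ) + c) - sInf (Set.range φ))
          = (1 - σm/σp) ^ (j+1) * ((σp - σm) * ∫ y, shf g (j+1) y ∂μ) := by
        rw [hc]; ring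
      linarith [hstep]

/-- propagating two-sided bounds through prefix steps -/
lemma avg : ∀ (t : ℕ) (g : ℕ → X → ℝ), Fam μ g → ∀ (j : ℕ) (a b : ℝ), 0 ≤ a →
    (∀ y, a ≤ Nseq μ q (shfI t g) y (j+1) / Nseq μ q (shfI t g) y j) →
    (∀ y, Nseq μ q (shfI t g) y (j+1) / Nseq μ q (shfI t g) y j ≤ b) →
    ∀ w, a ≤ Nseq μ q g w (j+t+1) / Nseq μ q g w (j+t) ∧
         Nseq μ q g w (j+t+1) / Nseq μ q g w (j+t) ≤ b := by
  intro t
  induction t with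
  | zero => intro g hg j a b ha hfa hfb w; exact ⟨hfa w, hfb w⟩
  | succ t IH =>
      intro g hg j a b ha hfa hfb w
      have hfa' : ∀ y, a ≤ Nseq μ q (shfI t (shf g)) y (j+1) / Nseq μ q (shfI t (shf g)) y j := by
        rw [shfI_shf]; exact hfa
      have hfb' : ∀ y, Nseq μ q (shfI t (shf g)) y (j+1) / Nseq μ q (shfI t (shf g)) y j ≤ b := by
        rw [shfI_shf]; exact hfb
      have hres := IH (shf g) hg.shf j a b ha hfa' hfb'
      have hstep := step_aux hσm hσ hq hql hqu g hg (j+t) ha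
        (fun y => (hres y).1) (fun y => (hres y).2)
      exact ⟨(hstep.1 w).1, (hstep.1 w).2⟩

end

/-- inequality (26) from the proof of Lemma 11. If the two
observation-function families `g` and `g′` agree for all indices `k > T`, then
for every `n ≥ T + 1` and all initializations `x, x′`, the one-step conditional
log-densities computed from the two families differ by at most
`ρ^{n−T−1}/(1 − ρ)`, where `ρ = 1 − σ₋/σ₊`. -/
theorem coupled_one_step_log_density_coalescence
    {X : Type*} [MeasurableSpace X] (μ : Measure X) [IsProbabilityMeasure μ]
    (σm σp : ℝ) (hσm : 0 < σm) (hσ : σm ≤ σp)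
    (q : X → X → ℝ) (hq : Measurable (Function.uncurry q))
    (hql : ∀ x x', σm ≤ q x x') (hqu : ∀ x x', q x x' ≤ σp)
    (g g' : ℕ → X → ℝ)
    (hgm : ∀ k, 1 ≤ k → Measurable (g k))
    (hg0 : ∀ k, 1 ≤ k → ∀ x, 0 ≤ g k x)
    (hgi : ∀ k, 1 ≤ k → Integrable (g k) μ)
    (hgpos : ∀ k, 1 ≤ k → 0 < ∫ x, g k x ∂μ)
    (hgm' : ∀ k, 1 ≤ k → Measurable (g' k))
    (hg0' : ∀ k, 1 ≤ k → ∀ x, 0 ≤ g' k x)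
    (hgi' : ∀ k, 1 ≤ k → Integrable (g' k) μ)
    (hgpos' : ∀ k, 1 ≤ k → 0 < ∫ x, g' k x ∂μ)
    (T : ℕ) (hcouple : ∀ k, T < k → g k = g' k)
    (n : ℕ) (hn : T + 1 ≤ n) (x x' : X) :
    |Real.log (Nseq μ q g x n / Nseq μ q g x (n - 1)) -
        Real.log (Nseq μ q g' x' n / Nseq μ q g' x' (n - 1))| ≤
      (1 - σm / σp) ^ (n - T - 1) / (1 - (1 - σm / σp)) := by
  have hσp : (0:ℝ) < σp := lt_of_lt_of_le hσm hσ
  have hg : Fam μ g := fun k hk => ⟨hgm k hk, hg0 k hk, hgi k hk, hgpos k hk⟩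
  have hg' : Fam μ g' := fun k hk => ⟨hgm' k hk, hg0' k hk, hgi' k hk, hgpos' k hk⟩
  obtain ⟨m, rfl⟩ : ∃ m, n = m + T + 1 := ⟨n - T - 1, by omega⟩
  have hsub1 : m + T + 1 - 1 = m + T := rfl
  have hsub2 : m + T + 1 - T - 1 = m := by omega
  rw [hsub1, hsub2]
  have hden : 1 - (1 - σm / σp) = σm / σp := by ring
  rw [hden]
  -- the common tail family
  have hagree : ∀ k, 1 ≤ k → shfI T g k = shfI T g' k := by
    intro k hk
    exact hcouple (k + T) (by omega)
  have hcongr : ∀ (y : X) (j : ℕ), Nseq μ q (shfI T g') y j = Nseq μ q (shfI T g) y j :=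
    fun y j => nseq_congr (fun k hk => (hagree k hk).symm) y j
  -- core bounds for the common ratio function
  have hcore := core hσm hσ hq hql hqu m (shfI T g) (hg.shfI T)
  set I := ∫ y, shfI T g (m+1) y ∂μ with hI
  have hIpos : 0 < I := (hg.shfI T (m+1) (by omega)).2.2.2
  set φ : X → ℝ := fun y => Nseq μ q (shfI T g) y (m+1) / Nseq μ q (shfI T g) y m with hφ
  have hne : Nonempty X := ⟨x⟩
  set c := (1 - σm/σp) ^ m * ((σp - σm) * I) with hc
  have hbdd : BddBelow (Set.range φ) := ⟨σm * I, by rintro v ⟨y, rfl⟩; exact hcore.1 y⟩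
  have haStar_ge : σm * I ≤ sInf (Set.range φ) :=
    le_csInf (Set.range_nonempty φ) (by rintro v ⟨y, rfl⟩; exact hcore.1 y)
  have haStar_pos : 0 < sInf (Set.range φ) := lt_of_lt_of_le (by positivity) haStar_ge
  have hφa : ∀ y, sInf (Set.range φ) ≤ φ y := fun y => csInf_le hbdd ⟨y, rfl⟩
  have hφb : ∀ y, φ y ≤ sInf (Set.range φ) + c := by
    intro y
    have h1 : φ y - c ≤ sInf (Set.range φ) := by
      apply le_csInf (Set.range_nonempty φ)
      rintro v ⟨y', rfl⟩
      linarith [hcore.2.2 y y']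
    linarith
  -- propagate through the first T steps, for both families
  have hv1 := avg hσm hσ hq hql hqu T g hg m (sInf (Set.range φ)) (sInf (Set.range φ) + c)
    haStar_pos.le hφa hφb x
  have hφa' : ∀ y, sInf (Set.range φ) ≤ Nseq μ q (shfI T g') y (m+1) / Nseq μ q (shfI T g') y m := by
    intro y; rw [hcongr y (m+1), hcongr y m]; exact hφa y
  have hφb' : ∀ y, Nseq μ q (shfI T g') y (m+1) / Nseq μ q (shfI T g') y m ≤ sInf (Set.range φ) + c := by
    intro y; rw [hcongr y (m+1), hcongr y m]; exact hφb y
  have hv2 := avg hσm hσ hq hql hqu T g' hg' m (sInf (Set.range φ)) (sInf (Set.range φ) + c)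
    haStar_pos.le hφa' hφb' x'
  -- conclude
  set aS := sInf (Set.range φ) with haS
  set v1 := Nseq μ q g x (m + T + 1) / Nseq μ q g x (m + T) with hv1d
  set v2 := Nseq μ q g' x' (m + T + 1) / Nseq μ q g' x' (m + T) with hv2d
  have hv1l : aS ≤ v1 := hv1.1
  have hv1u : v1 ≤ aS + c := hv1.2
  have hv2l : aS ≤ v2 := hv2.1
  have hv2u : v2 ≤ aS + c := hv2.2
  have hc0 : 0 ≤ c := by
    have h1 : (0:ℝ) ≤ 1 - σm/σp := by
      have : σm/σp ≤ 1 := (div_le_one hσp).2 hσ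
      linarith
    have h2 : (0:ℝ) ≤ σp - σm := by linarith
    rw [hc]
    exact mul_nonneg (pow_nonneg h1 m) (mul_nonneg h2 hIpos.le)
  have hv1p : 0 < v1 := lt_of_lt_of_le haStar_pos hv1l
  have hv2p : 0 < v2 := lt_of_lt_of_le haStar_pos hv2l
  have hlogb : |Real.log v1 - Real.log v2| ≤ Real.log (aS + c) - Real.log aS := by
    have l1 : Real.log v1 ≤ Real.log (aS + c) := Real.log_le_log hv1p hv1u
    have l2 : Real.log v2 ≤ Real.log (aS + c) := Real.log_le_log hv2p hv2u
    have l3 : Real.log aS ≤ Real.log v1 := Real.log_le_log haStar_pos hv1l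
    have l4 : Real.log aS ≤ Real.log v2 := Real.log_le_log haStar_pos hv2l
    rw [abs_sub_le_iff]
    constructor <;> linarith
  have hlog2 : Real.log (aS + c) - Real.log aS ≤ c / aS := by
    rw [← Real.log_div (by positivity) haStar_pos.ne']
    have h1 : Real.log ((aS + c)/aS) ≤ (aS + c)/aS - 1 :=
      Real.log_le_sub_one_of_pos (by positivity)
    have h2 : (aS + c)/aS - 1 = c / aS := by
      rw [div_sub_one haStar_pos.ne']; ring
    linarith
  have hfinal : c / aS ≤ (1 - σm / σp) ^ m / (σm / σp) := by
    have h1 : c / aS ≤ c / (σm * I) := by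
      apply div_le_div_of_nonneg_left hc0 (by positivity) haStar_ge
    have h2 : c / (σm * I) ≤ (1 - σm / σp) ^ m / (σm / σp) := by
      rw [div_le_div_iff₀ (by positivity) (by positivity), hc]
      have hr0 : (0:ℝ) ≤ (1 - σm/σp) ^ m := by
        apply pow_nonneg
        have : σm/σp ≤ 1 := (div_le_one hσp).2 hσ
        linarith
      have hkey : (σp - σm) * (σm / σp) ≤ σm := by
        have h3 : σp - σm ≤ σp := by linarith
        have h4 : (σp - σm) * (σm / σp) ≤ σp * (σm / σp) :=
          mul_le_mul_of_nonneg_right h3 (by positivity)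
        have h5 : σp * (σm / σp) = σm := by field_simp
        linarith
      have := mul_le_mul_of_nonneg_left hkey (mul_nonneg hr0 hIpos.le)
      nlinarith [this]
    linarith
  linarith [hlogb, hlog2, hfinal]
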